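/- Let {X(i)} be i.i.d. nonnegative with mean X̄ and let B(i+1) = B(i) − M·1{B(i)>M} + X(i) (infinite buffer, K = ∞) with M < X̄ and B(0) ≥ 0. Then almost surely there exists a finite (random) time N such that B(i) > M for all i ≥ N; consequently P_UL(i) = M for all i ≥ N almost surely. -/

import Mathlib

open MeasureTheory ProbabilityTheory Filter Finset

/-- For an infinite buffer with i.i.d. nonnegative harvesting `X(i)` of mean `X̄ > M`,
almost surely there is a finite time `N` after which `B(i) > M` for all `i ≥ N`;
consequently `P_UL(i) = M·1{B(i) > M} = M` for all `i ≥ N` almost surely. -/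
theorem stmt18 {Ω : Type*} [MeasureSpace Ω] [IsProbabilityMeasure (ℙ : Measure Ω)]
    (X : ℕ → Ω → ℝ) (hmeas : ∀ i, Measurable (X i))
    (hindep : iIndepFun X ℙ)
    (hident : ∀ i, IdentDistrib (X i) (X 0) ℙ ℙ)
    (hnonneg : ∀ i, ∀ ω, 0 ≤ X i ω)
    (hint : Integrable (X 0) ℙ)
    (Xbar M : ℝ) (hXbar : Xbar = ∫ ω, X 0 ω ∂ℙ) (hM : 0 < M) (hMX : M < Xbar)
    (B : ℕ → Ω → ℝ) (hB0 : ∀ ω, 0 ≤ B 0 ω)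
    (hrec : ∀ i, ∀ ω,
      B (i + 1) ω = B i ω - M * (if M < B i ω then 1 else 0) + X i ω) :
    ∀ᵐ ω ∂(ℙ : Measure Ω), ∃ N : ℕ, ∀ i ≥ N,
      M < B i ω ∧ M * (if M < B i ω then 1 else 0) = M := by
  -- lower bound: B n ω ≥ ∑_{i<n} X i ω - n * M
  have hlow : ∀ ω, ∀ n : ℕ, (∑ i ∈ range n, X i ω) - n * M ≤ B n ω := by
    intro ω n
    induction n with
    | zero => simpa using hB0 ω
    | succ n ih =>
      rw [hrec n ω, Finset.sum_range_succ]
      have h1 : M * (if M < B n ω then 1 else 0) ≤ M := by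
        split <;> simp [hM.le]
      push_cast
      nlinarith
  have hslln := strong_law_ae X hint
    (fun i j hij => hindep.indepFun hij) hident
  filter_upwards [hslln] with ω hω
  rw [← hXbar] at hω
  -- eventually (n:ℝ)⁻¹ * ∑ > (Xbar + M)/2
  have hmid : M < (Xbar + M) / 2 := by linarith
  have h2 : ∀ᶠ n : ℕ in atTop, (Xbar + M) / 2 < (n : ℝ)⁻¹ • (∑ i ∈ range n, X i ω) :=
    hω.eventually (eventually_gt_nhds (by linarith))
  -- eventually n * (Xbar - M)/2 > M
  have h3 : Tendsto (fun n : ℕ => (n : ℝ) * ((Xbar - M) / 2)) atTop atTop :=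
    Tendsto.atTop_mul_const (by linarith) tendsto_natCast_atTop_atTop
  have h4 : ∀ᶠ n : ℕ in atTop, M < (n : ℝ) * ((Xbar - M) / 2) :=
    h3.eventually_gt_atTop M
  obtain ⟨N, hN⟩ := (h2.and h4).exists_forall_of_atTop
  refine ⟨N + 1, fun i hi => ?_⟩
  obtain ⟨hA, hBnd⟩ := hN i (le_of_add_le_left hi)
  have hipos : (0 : ℝ) < i := by
    have : 1 ≤ i := le_trans (Nat.le_add_left 1 N) hi
    exact_mod_cast this
  have hsum : (i : ℝ) * ((Xbar + M) / 2) < ∑ j ∈ range i, X j ω := by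
    have := (mul_lt_mul_iff_right₀ hipos).2 hA
    rwa [smul_eq_mul, ← mul_assoc, mul_inv_cancel₀ hipos.ne', one_mul] at this
  have hBgt : M < B i ω := by
    have := hlow ω i
    nlinarith
  exact ⟨hBgt, by simp [hBgt]⟩
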